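/- Let X be a Hilbert space, let Y and Z be normed spaces, let A : X → Y be a bounded linear map and K : X → Z a compact linear map, and suppose there is C > 0 with ‖u‖_X ≤ C ( ‖Au‖_Y + ‖Ku‖_Z ) for all u ∈ X. Let V ⊆ X be a closed subspace such that V ∩ ker A = {0}. Then there exists a constant C' > 0 such that ‖v‖_X ≤ C' ‖Av‖_Y for every v ∈ V. -/

import Mathlib

/-- A priori estimate on a closed complement of the kernel: if `‖u‖ ≤ C(‖Au‖ + ‖Ku‖)`
on a Hilbert space `X` with `K` compact, and `V` is a closed subspace with
`V ∩ ker A = {0}`, then `‖v‖ ≤ C'‖Av‖` for all `v ∈ V`. -/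
theorem apriori_estimate_on_complement
    (X Y Z : Type*)
    [NormedAddCommGroup X] [InnerProductSpace ℝ X] [CompleteSpace X]
    [NormedAddCommGroup Y] [NormedSpace ℝ Y]
    [NormedAddCommGroup Z] [NormedSpace ℝ Z]
    (A : X →L[ℝ] Y) (K : X →L[ℝ] Z) (hK : IsCompactOperator ⇑K)
    (C : ℝ) (hC : 0 < C)
    (hest : ∀ u : X, ‖u‖ ≤ C * (‖A u‖ + ‖K u‖))
    (V : Submodule ℝ X) (hVclosed : IsClosed (V : Set X))
    (hVker : V ⊓ LinearMap.ker (A : X →ₗ[ℝ] Y) = ⊥) :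
    ∃ C' : ℝ, 0 < C' ∧ ∀ v ∈ V, ‖v‖ ≤ C' * ‖A v‖ := by
  by_contra h
  push_neg at h
  -- Build a sequence of unit vectors `u n ∈ V` with `‖A (u n)‖ < 1/(n+1)`.
  have hseq : ∀ n : ℕ, ∃ u : X, u ∈ V ∧ ‖u‖ = 1 ∧ ‖A u‖ < 1 / (n + 1) := by
    intro n
    obtain ⟨v, hvV, hv⟩ := h (n + 1) (by positivity)
    have hv0 : v ≠ 0 := by
      rintro rfl
      simp at hv
    have hvn : 0 < ‖v‖ := norm_pos_iff.2 hv0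
    refine ⟨‖v‖⁻¹ • v, V.smul_mem _ hvV, ?_, ?_⟩
    · simp [norm_smul, abs_of_pos (inv_pos.2 hvn), inv_mul_cancel₀ hvn.ne']
    · have hn1 : (0:ℝ) < (n:ℝ) + 1 := by positivity
      rw [map_smul, norm_smul, norm_inv, norm_norm, inv_mul_lt_iff₀ hvn,
        mul_one_div]
      exact (lt_div_iff₀' hn1).mpr hv
  choose u huV hu1 huA using hseq
  -- `A (u n) → 0`
  have hA0 : Filter.Tendsto (fun n => A (u n)) Filter.atTop (nhds 0) := by
    rw [tendsto_zero_iff_norm_tendsto_zero]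
    refine squeeze_zero (fun n => norm_nonneg _) (fun n => (huA n).le) ?_
    exact tendsto_one_div_add_atTop_nhds_zero_nat
  -- `K (u n)` has a convergent subsequence
  have hKcpt : IsCompact (closure (⇑K '' Metric.closedBall 0 2)) :=
    hK.isCompact_closure_image_closedBall (𝕜₁ := ℝ) 2
  have hmem : ∀ n, K (u n) ∈ closure (⇑K '' Metric.closedBall 0 2) := fun n =>
    subset_closure ⟨u n, by
      simp only [Metric.mem_closedBall, dist_zero_right, hu1 n]; norm_num, rfl⟩
  obtain ⟨z, -, φ, hφmono, hKconv⟩ := hKcpt.tendsto_subseq hmem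
  -- the subsequence is Cauchy thanks to the estimate
  set w : ℕ → X := fun n => u (φ n) with hw
  have hAw : Filter.Tendsto (fun n => A (w n)) Filter.atTop (nhds 0) :=
    hA0.comp hφmono.tendsto_atTop
  have hCauchy : CauchySeq w := by
    rw [Metric.cauchySeq_iff]
    intro ε hε
    have hAc : CauchySeq (fun n => A (w n)) := hAw.cauchySeq
    have hKc : CauchySeq (fun n => K (w n)) := hKconv.cauchySeq
    rw [Metric.cauchySeq_iff] at hAc hKc
    obtain ⟨N₁, hN₁⟩ := hAc (ε / (2 * C)) (by positivity)
    obtain ⟨N₂, hN₂⟩ := hKc (ε / (2 * C)) (by positivity)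
    refine ⟨max N₁ N₂, fun m hm n hn => ?_⟩
    have h1 := hN₁ m (le_of_max_le_left hm) n (le_of_max_le_left hn)
    have h2 := hN₂ m (le_of_max_le_right hm) n (le_of_max_le_right hn)
    rw [dist_eq_norm] at h1 h2 ⊢
    calc ‖w m - w n‖ ≤ C * (‖A (w m - w n)‖ + ‖K (w m - w n)‖) := hest _
      _ = C * (‖A (w m) - A (w n)‖ + ‖K (w m) - K (w n)‖) := by rw [map_sub, map_sub]
      _ < C * (ε / (2 * C) + ε / (2 * C)) := by
          apply mul_lt_mul_of_pos_left (add_lt_add h1 h2) hC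
      _ = ε := by field_simp; ring
  obtain ⟨x, hx⟩ := cauchySeq_tendsto_of_complete hCauchy
  -- `x ∈ V`, `‖x‖ = 1`, `A x = 0`: contradiction.
  have hxV : x ∈ V := hVclosed.mem_of_tendsto hx (Filter.Eventually.of_forall fun n => huV _)
  have hxnorm : ‖x‖ = 1 := by
    have := (continuous_norm.tendsto x).comp hx
    have h1 : Filter.Tendsto (fun n => ‖w n‖) Filter.atTop (nhds 1) := by
      simp only [hw, hu1]
      exact tendsto_const_nhds
    exact tendsto_nhds_unique this h1
  have hAx : A x = 0 := by
    have := (A.continuous.tendsto x).comp hx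
    exact tendsto_nhds_unique this hAw
  have : x ∈ V ⊓ LinearMap.ker (A : X →ₗ[ℝ] Y) := ⟨hxV, hAx⟩
  rw [hVker] at this
  simp only [Submodule.mem_bot] at this
  rw [this, norm_zero] at hxnorm
  norm_num at hxnorm
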